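/- Let E be a real normed space, X a metric space, and φ : E → X an isometric map such that for every x ∈ X the function a ↦ d(φa, x) is convex on E. Then for any two points x₀, x₁ ∈ X there exists a 1-Lipschitz function λ : X → ℝ such that λ ∘ φ : E → ℝ is linear and λ(x₀) − λ(x₁) = d(x₀, x₁). -/

import Mathlib

/-- If `X` is a metric space over the normed space `E` (i.e. `φ : E → X` is isometric and
`a ↦ d(φ a, x)` is convex for every `x ∈ X`), then for any `x₀, x₁ ∈ X` there is a
1-Lipschitz function `λ : X → ℝ`, linear on `E`, with `λ x₀ - λ x₁ = d(x₀, x₁)`. -/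
theorem exists_norming_lipschitz_functional (E : Type*) [NormedAddCommGroup E]
    [NormedSpace ℝ E] (X : Type*) [MetricSpace X] (φ : E → X) (hφ : Isometry φ)
    (hconv : ∀ x : X, ConvexOn ℝ Set.univ fun a : E => dist (φ a) x)
    (x₀ x₁ : X) :
    ∃ lam : X → ℝ, LipschitzWith 1 lam ∧ IsLinearMap ℝ (lam ∘ φ) ∧
      lam x₀ - lam x₁ = dist x₀ x₁ := by
  set D : ℝ := dist x₀ x₁ with hD
  -- the quantity attached to a configuration (t, a, b)
  set q : E → E → ℝ := fun a b => D - dist (φ b) x₀ - dist (φ a) x₁ with hq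
  have hqle : ∀ a b : E, q a b ≤ ‖b - a‖ := by
    intro a b
    have h1 : D ≤ dist x₀ (φ b) + dist (φ b) (φ a) + dist (φ a) x₁ := dist_triangle4 _ _ _ _
    have h2 : dist (φ b) (φ a) = ‖b - a‖ := by
      rw [hφ.dist_eq, dist_eq_norm]
    have h3 : dist x₀ (φ b) = dist (φ b) x₀ := dist_comm _ _
    simp only [hq]
    linarith [h1, h2.le, h3]
  set S : E → Set ℝ := fun v =>
    {r | ∃ t : ℝ, ∃ a b : E, 0 ≤ t ∧ r = ‖v + t • (b - a)‖ - t * q a b} with hS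
  have hmem : ∀ (v : E) (t : ℝ) (a b : E), 0 ≤ t →
      (‖v + t • (b - a)‖ - t * q a b) ∈ S v := by
    intro v t a b ht; exact ⟨t, a, b, ht, rfl⟩
  have hSne : ∀ v : E, (S v).Nonempty := by
    intro v
    exact ⟨‖v + (0:ℝ) • ((0:E) - 0)‖ - 0 * q 0 0, hmem v 0 0 0 le_rfl⟩
  have hSlb : ∀ v : E, ∀ r ∈ S v, -‖v‖ ≤ r := by
    rintro v r ⟨t, a, b, ht, rfl⟩
    have h1 : t * q a b ≤ t * ‖b - a‖ := mul_le_mul_of_nonneg_left (hqle a b) ht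
    have h2 : ‖t • (b - a)‖ = t * ‖b - a‖ := by
      rw [norm_smul, Real.norm_eq_abs, abs_of_nonneg ht]
    have h3 : ‖t • (b - a)‖ ≤ ‖v + t • (b - a)‖ + ‖v‖ := by
      have := norm_sub_le (v + t • (b - a)) v
      simpa [add_sub_cancel_left] using this
    linarith
  have hbdd : ∀ v : E, BddBelow (S v) := fun v => ⟨-‖v‖, fun r hr => hSlb v r hr⟩
  set N : E → ℝ := fun v => sInf (S v) with hN
  have hNle : ∀ (v : E), ∀ r ∈ S v, N v ≤ r := fun v r hr => csInf_le (hbdd v) hr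
  have hNge : ∀ v : E, -‖v‖ ≤ N v := fun v => le_csInf (hSne v) (hSlb v)
  have hNnorm : ∀ v : E, N v ≤ ‖v‖ := by
    intro v
    have := hNle v _ (hmem v 0 0 0 le_rfl)
    simpa using this
  -- positive homogeneity
  have hHomLe : ∀ c : ℝ, 0 < c → ∀ v : E, N (c • v) ≤ c * N v := by
    intro c hc v
    have key : ∀ r ∈ S v, N (c • v) ≤ c * r := by
      rintro r ⟨t, a, b, ht, rfl⟩
      have hmemc : (‖c • v + (c * t) • (b - a)‖ - (c * t) * q a b) ∈ S (c • v) :=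
        hmem (c • v) (c * t) a b (by positivity)
      have h1 : ‖c • v + (c * t) • (b - a)‖ = c * ‖v + t • (b - a)‖ := by
        rw [mul_smul, ← smul_add, norm_smul, Real.norm_eq_abs, abs_of_pos hc]
      calc N (c • v) ≤ ‖c • v + (c * t) • (b - a)‖ - (c * t) * q a b := hNle _ _ hmemc
        _ = c * (‖v + t • (b - a)‖ - t * q a b) := by rw [h1]; ring
    have hdiv : N (c • v) / c ≤ N v := by
      refine le_csInf (hSne v) ?_
      intro r hr
      rw [div_le_iff₀ hc]
      have := key r hr
      linarith [this]
    rw [div_le_iff₀ hc] at hdiv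
    linarith
  have hHom : ∀ c : ℝ, 0 < c → ∀ v : E, N (c • v) = c * N v := by
    intro c hc v
    refine le_antisymm (hHomLe c hc v) ?_
    have := hHomLe c⁻¹ (by positivity) (c • v)
    rw [inv_smul_smul₀ hc.ne'] at this
    calc c * N v ≤ c * (c⁻¹ * N (c • v)) := by
          exact mul_le_mul_of_nonneg_left this hc.le
      _ = N (c • v) := by field_simp
  -- subadditivity: key combination step
  have hKey : ∀ v w : E, ∀ r ∈ S v, ∀ s ∈ S w, N (v + w) ≤ r + s := by
    rintro v w r ⟨t₁, a₁, b₁, ht₁, rfl⟩ s ⟨t₂, a₂, b₂, ht₂, rfl⟩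
    rcases eq_or_lt_of_le (by positivity : (0:ℝ) ≤ t₁ + t₂) with h0 | hpos
    · -- t₁ = t₂ = 0
      have e1 : t₁ = 0 := by linarith [ht₁, ht₂, h0.symm.le, h0.ge]
      have e2 : t₂ = 0 := by linarith [ht₁, ht₂, h0.symm.le]
      subst e1; subst e2
      have := hNnorm (v + w)
      have htri := norm_add_le v w
      simp only [zero_smul, add_zero, zero_mul, sub_zero]
      linarith
    · set t : ℝ := t₁ + t₂ with hts
      set w₁ : ℝ := t₁ / t with hw₁
      set w₂ : ℝ := t₂ / t with hw₂
      have hw₁0 : 0 ≤ w₁ := by positivity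
      have hw₂0 : 0 ≤ w₂ := by positivity
      have hw12 : w₁ + w₂ = 1 := by
        rw [hw₁, hw₂, ← add_div, div_self hpos.ne']
      have htw₁ : t * w₁ = t₁ := by rw [hw₁]; field_simp
      have htw₂ : t * w₂ = t₂ := by rw [hw₂]; field_simp
      set a : E := w₁ • a₁ + w₂ • a₂ with ha
      set b : E := w₁ • b₁ + w₂ • b₂ with hb
      have hsmul : t • (b - a) = t₁ • (b₁ - a₁) + t₂ • (b₂ - a₂) := by
        rw [ha, hb, smul_sub, smul_add, smul_add, smul_smul, smul_smul, smul_smul, smul_smul,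
          htw₁, htw₂, smul_sub, smul_sub]
        abel
      have hmemvw : (‖(v + w) + t • (b - a)‖ - t * q a b) ∈ S (v + w) :=
        hmem (v + w) t a b hpos.le
      have hnorm : ‖(v + w) + t • (b - a)‖ ≤ ‖v + t₁ • (b₁ - a₁)‖ + ‖w + t₂ • (b₂ - a₂)‖ := by
        have e : v + w + (t₁ • (b₁ - a₁) + t₂ • (b₂ - a₂)) =
            (v + t₁ • (b₁ - a₁)) + (w + t₂ • (b₂ - a₂)) := by abel
        rw [hsmul, e]
        exact norm_add_le _ _
      have hcb : dist (φ b) x₀ ≤ w₁ * dist (φ b₁) x₀ + w₂ * dist (φ b₂) x₀ := by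
        have := (hconv x₀).2 (Set.mem_univ b₁) (Set.mem_univ b₂) hw₁0 hw₂0 hw12
        simpa [smul_eq_mul] using this
      have hca : dist (φ a) x₁ ≤ w₁ * dist (φ a₁) x₁ + w₂ * dist (φ a₂) x₁ := by
        have := (hconv x₁).2 (Set.mem_univ a₁) (Set.mem_univ a₂) hw₁0 hw₂0 hw12
        simpa [smul_eq_mul] using this
      have hqq : t₁ * q a₁ b₁ + t₂ * q a₂ b₂ ≤ t * q a b := by
        simp only [hq]
        have h1 : t * dist (φ b) x₀ ≤ t₁ * dist (φ b₁) x₀ + t₂ * dist (φ b₂) x₀ := by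
          calc t * dist (φ b) x₀ ≤ t * (w₁ * dist (φ b₁) x₀ + w₂ * dist (φ b₂) x₀) :=
                mul_le_mul_of_nonneg_left hcb hpos.le
            _ = (t * w₁) * dist (φ b₁) x₀ + (t * w₂) * dist (φ b₂) x₀ := by ring
            _ = _ := by rw [htw₁, htw₂]
        have h2 : t * dist (φ a) x₁ ≤ t₁ * dist (φ a₁) x₁ + t₂ * dist (φ a₂) x₁ := by
          calc t * dist (φ a) x₁ ≤ t * (w₁ * dist (φ a₁) x₁ + w₂ * dist (φ a₂) x₁) :=
                mul_le_mul_of_nonneg_left hca hpos.le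
            _ = (t * w₁) * dist (φ a₁) x₁ + (t * w₂) * dist (φ a₂) x₁ := by ring
            _ = _ := by rw [htw₁, htw₂]
        have ht' : t * D = t₁ * D + t₂ * D := by rw [hts]; ring
        nlinarith [h1, h2]
      calc N (v + w) ≤ ‖(v + w) + t • (b - a)‖ - t * q a b := hNle _ _ hmemvw
        _ ≤ (‖v + t₁ • (b₁ - a₁)‖ - t₁ * q a₁ b₁) + (‖w + t₂ • (b₂ - a₂)‖ - t₂ * q a₂ b₂) := by
            linarith
  have hAdd : ∀ v w : E, N (v + w) ≤ N v + N w := by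
    intro v w
    have h1 : ∀ s ∈ S w, N (v + w) - s ≤ N v := by
      intro s hs
      refine le_csInf (hSne v) ?_
      intro r hr
      linarith [hKey v w r hr s hs]
    have h2 : N (v + w) - N v ≤ N w := by
      refine le_csInf (hSne w) ?_
      intro s hs
      linarith [h1 s hs]
    linarith
  -- Hahn–Banach
  obtain ⟨f, -, hf⟩ := exists_extension_of_le_sublinear
    (LinearMap.toPMap (0 : E →ₗ[ℝ] ℝ) ⊥) N hHom hAdd
    (fun x => by
      have hx0 : (x : E) = 0 := (Submodule.mem_bot ℝ).1 x.2
      have := hNge (x : E)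
      change (0 : E →ₗ[ℝ] ℝ) (x : E) ≤ N (x : E)
      simp only [LinearMap.zero_apply]
      rw [hx0] at this ⊢
      simpa using this)
  have hfnorm : ∀ a : E, f a ≤ ‖a‖ := fun a => (hf a).trans (hNnorm a)
  have hstar : ∀ a b : E, q a b ≤ f b - f a := by
    intro a b
    have hmem1 : (‖-(b - a) + (1:ℝ) • (b - a)‖ - 1 * q a b) ∈ S (-(b - a)) :=
      hmem _ 1 a b zero_le_one
    have h1 : N (-(b - a)) ≤ -q a b := by
      have := hNle _ _ hmem1
      simpa using this
    have h2 : f (-(b - a)) ≤ -q a b := (hf _).trans h1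
    rw [map_neg, map_sub] at h2
    linarith
  -- extension of f to X
  set T : X → Set ℝ := fun x => {r | ∃ a : E, r = f a + dist (φ a) x} with hT
  have hTne : ∀ x : X, (T x).Nonempty := fun x => ⟨f 0 + dist (φ 0) x, 0, rfl⟩
  have hTlb : ∀ x : X, ∀ r ∈ T x, -(dist (φ 0) x) ≤ r := by
    rintro x r ⟨a, rfl⟩
    have h1 : -‖a‖ ≤ f a := by
      have := hfnorm (-a)
      rw [map_neg, norm_neg] at this
      linarith
    have h2 : ‖a‖ ≤ dist (φ a) x + dist x (φ 0) := by
      have : ‖a‖ = dist (φ a) (φ 0) := by rw [hφ.dist_eq, dist_eq_norm, sub_zero]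
      rw [this]
      exact dist_triangle _ _ _
    rw [dist_comm (φ 0) x]
    linarith
  have hTbdd : ∀ x : X, BddBelow (T x) := fun x => ⟨-(dist (φ 0) x), fun r hr => hTlb x r hr⟩
  set μ : X → ℝ := fun x => sInf (T x) with hμ
  have hμle : ∀ (x : X) (a : E), μ x ≤ f a + dist (φ a) x := fun x a =>
    csInf_le (hTbdd x) ⟨a, rfl⟩
  have hμlip : ∀ x y : X, μ x ≤ μ y + dist x y := by
    intro x y
    have : μ x - dist x y ≤ μ y := by
      refine le_csInf (hTne y) ?_
      rintro r ⟨a, rfl⟩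
      have h1 := hμle x a
      have h2 : dist (φ a) x ≤ dist (φ a) y + dist y x := dist_triangle _ _ _
      rw [dist_comm y x] at h2
      linarith
    linarith
  have hμφ : ∀ a : E, μ (φ a) = f a := by
    intro a
    refine le_antisymm ?_ ?_
    · have := hμle (φ a) a
      simpa using this
    · refine le_csInf (hTne (φ a)) ?_
      rintro r ⟨b, rfl⟩
      have h1 : f a - f b = f (a - b) := by rw [map_sub]
      have h2 : f (a - b) ≤ ‖a - b‖ := hfnorm _
      have h3 : dist (φ b) (φ a) = ‖a - b‖ := by
        rw [hφ.dist_eq, dist_eq_norm, norm_sub_rev]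
      linarith
  -- the final function
  refine ⟨fun x => min (μ x) (μ x₀ - D + dist x x₁), ?_, ?_, ?_⟩
  · -- Lipschitz
    have l1 : LipschitzWith 1 μ := by
      refine LipschitzWith.of_dist_le_mul (fun x y => ?_)
      rw [Real.dist_eq, abs_le, NNReal.coe_one, one_mul]
      constructor
      · have := hμlip y x
        rw [dist_comm y x] at this
        linarith
      · linarith [hμlip x y]
    have l2 : LipschitzWith 1 (fun x : X => μ x₀ - D + dist x x₁) := by
      refine LipschitzWith.of_dist_le_mul (fun x y => ?_)
      rw [Real.dist_eq, NNReal.coe_one, one_mul]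
      have h1 : dist x x₁ ≤ dist x y + dist y x₁ := dist_triangle _ _ _
      have h2 : dist y x₁ ≤ dist y x + dist x x₁ := dist_triangle _ _ _
      rw [dist_comm y x] at h2
      rw [abs_le]
      constructor <;> [linarith; linarith]
    have := l1.min l2
    simpa using this
  · -- linear on E
    have heq : (fun x => min (μ x) (μ x₀ - D + dist x x₁)) ∘ φ = ⇑f := by
      funext a
      simp only [Function.comp_apply]
      have h1 : μ (φ a) = f a := hμφ a
      have h2 : f a ≤ μ x₀ - D + dist (φ a) x₁ := by
        have : f a + D - dist (φ a) x₁ ≤ μ x₀ := by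
          refine le_csInf (hTne x₀) ?_
          rintro r ⟨b, rfl⟩
          have := hstar a b
          simp only [hq] at this
          linarith
        linarith
      rw [h1, min_eq_left h2]
    rw [heq]
    exact f.isLinear
  · -- norming
    have h1 : min (μ x₀) (μ x₀ - D + dist x₀ x₁) = μ x₀ := by
      rw [← hD]
      simp
    have h2 : min (μ x₁) (μ x₀ - D + dist x₁ x₁) = μ x₀ - D := by
      rw [dist_self, add_zero]
      refine min_eq_right ?_
      have := hμlip x₀ x₁
      rw [← hD] at this
      linarith
    show min (μ x₀) (μ x₀ - D + dist x₀ x₁) - min (μ x₁) (μ x₀ - D + dist x₁ x₁) = D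
    rw [h1, h2]
    ring
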